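/- Let f(x) = a₁²x₁² + ⋯ + aₙ²xₙ² with aᵢ > 0, and let M_k be the graph z = f(x) + k. For any p ∈ M_k and h > 0, the volume of the region between M_k and the tangent hyperplane of M_{k+h} parallel to the tangent at p equals γ_n h^{(n+2)/2}, where γ_n = 2σ_{n-1}/(n(n+2)a₁⋯aₙ) and σ_{n-1} is the surface area of the unit (n-1)-sphere. In particular this is independent of p and k. -/

import Mathlib

open Finset MeasureTheory Real

/-- For the elliptic paraboloid `M_k : z = Σaᵢ²xᵢ² + k`, the volume cut off from `M_k` by
the tangent hyperplane of `M_{k+h}` parallel to the tangent hyperplane at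
`p ∈ M_k` equals `γ_n h^{(n+2)/2}`, where `γ_n = 2σ_{n-1}/(n(n+2)a₁⋯aₙ)` and
`σ_{n-1} = n ω_n`; in particular it is independent of `p` and `k`. -/
theorem stmt13 (n : ℕ) (hn : 1 ≤ n) (a : Fin n → ℝ) (ha : ∀ i, 0 < a i) (k h : ℝ)
    (hh : 0 < h)
    (f : EuclideanSpace ℝ (Fin n) → ℝ)
    (hf : ∀ x, f x = ∑ i, (a i) ^ 2 * (x i) ^ 2)
    (ω σ : ℝ) (hω : ω = (volume (Metric.ball (0 : EuclideanSpace ℝ (Fin n)) 1)).toReal)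
    (hσ : σ = n * ω)
    (p : EuclideanSpace ℝ (Fin n)) :
    (volume {q : (EuclideanSpace ℝ (Fin n)) × ℝ |
        f q.1 + k ≤ q.2 ∧
        q.2 ≤ f p + k + h + ∑ i, 2 * (a i) ^ 2 * p i * (q.1 i - p i)}).toReal =
      (2 * σ / (n * (n + 2) * ∏ i, a i)) * h ^ (((n : ℝ) + 2) / 2) := by
  classical
  haveI : Nonempty (Fin n) := ⟨⟨0, hn⟩⟩
  have hn0 : (0:ℝ) < n := by exact_mod_cast hn
  have hA : 0 < ∏ i, a i := Finset.prod_pos fun i _ => ha i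
  -- continuity facts
  have hfc : Continuous f := by
    rw [funext hf]
    exact continuous_finset_sum _ fun i _ =>
      continuous_const.mul (((EuclideanSpace.proj (𝕜 := ℝ) i).continuous).pow 2)
  have hGc : Continuous fun x : EuclideanSpace ℝ (Fin n) =>
      f p + k + h + ∑ i, 2 * (a i) ^ 2 * p i * (x i - p i) := by
    exact continuous_const.add (continuous_finset_sum _ fun i _ =>
      continuous_const.mul (((EuclideanSpace.proj (𝕜 := ℝ) i).continuous).sub continuous_const))
  -- measurability of the region
  have hSm : MeasurableSet {q : (EuclideanSpace ℝ (Fin n)) × ℝ |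
      f q.1 + k ≤ q.2 ∧
      q.2 ≤ f p + k + h + ∑ i, 2 * (a i) ^ 2 * p i * (q.1 i - p i)} := by
    refine ((isClosed_le ((hfc.comp continuous_fst).add continuous_const) continuous_snd).inter
      (isClosed_le continuous_snd (hGc.comp continuous_fst))).measurableSet
  -- step 1 : Fubini
  have step1 : volume {q : (EuclideanSpace ℝ (Fin n)) × ℝ |
        f q.1 + k ≤ q.2 ∧
        q.2 ≤ f p + k + h + ∑ i, 2 * (a i) ^ 2 * p i * (q.1 i - p i)}
      = ∫⁻ x : EuclideanSpace ℝ (Fin n),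
          ENNReal.ofReal (h - ∑ i, (a i) ^ 2 * (x i - p i) ^ 2) := by
    rw [Measure.volume_eq_prod, Measure.prod_apply hSm]
    refine lintegral_congr fun x => ?_
    have hpre : (Prod.mk x ⁻¹' {q : (EuclideanSpace ℝ (Fin n)) × ℝ |
        f q.1 + k ≤ q.2 ∧
        q.2 ≤ f p + k + h + ∑ i, 2 * (a i) ^ 2 * p i * (q.1 i - p i)})
        = Set.Icc (f x + k) (f p + k + h + ∑ i, 2 * (a i) ^ 2 * p i * (x i - p i)) := rfl
    rw [hpre, Real.volume_Icc]
    congr 1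
    have hsum : ∑ i, 2 * (a i) ^ 2 * p i * (x i - p i)
        = (∑ i, (a i) ^ 2 * (x i) ^ 2) - (∑ i, (a i) ^ 2 * (p i) ^ 2)
          - ∑ i, (a i) ^ 2 * (x i - p i) ^ 2 := by
      rw [← Finset.sum_sub_distrib, ← Finset.sum_sub_distrib]
      exact Finset.sum_congr rfl fun i _ => by ring
    rw [hf x, hf p, hsum]; ring
  -- the measurable equivalence with the pi type
  set e := (MeasurableEquiv.toLp 2 (Fin n → ℝ)).symm with he
  have hmp : MeasurePreserving e volume volume :=
    EuclideanSpace.volume_preserving_symm_measurableEquiv_toLp (Fin n)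
  -- step 2 : transfer to pi and translate
  have step2 : (∫⁻ x : EuclideanSpace ℝ (Fin n),
        ENNReal.ofReal (h - ∑ i, (a i) ^ 2 * (x i - p i) ^ 2))
      = ∫⁻ y : Fin n → ℝ, ENNReal.ofReal (h - ∑ i, (a i) ^ 2 * (y i) ^ 2) := by
    have t1 : (∫⁻ x : EuclideanSpace ℝ (Fin n),
          ENNReal.ofReal (h - ∑ i, (a i) ^ 2 * (x i - p i) ^ 2))
        = ∫⁻ y : Fin n → ℝ, ENNReal.ofReal (h - ∑ i, (a i) ^ 2 * (y i - p i) ^ 2) :=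
      (MeasurePreserving.lintegral_map_equiv
        (fun y : Fin n → ℝ => ENNReal.ofReal (h - ∑ i, (a i) ^ 2 * (y i - p i) ^ 2)) e hmp).symm
    rw [t1]
    exact lintegral_sub_right_eq_self
      (fun y : Fin n → ℝ => ENNReal.ofReal (h - ∑ i, (a i) ^ 2 * (y i) ^ 2)) (fun i => p i)
  -- step 3 : linear change of variables in the pi type
  set c : Fin n → ℝ := fun i => Real.sqrt h / a i with hc
  have hc0 : ∀ i, 0 < c i := fun i => div_pos (Real.sqrt_pos.2 hh) (ha i)
  have hC : 0 < ∏ i, c i := Finset.prod_pos fun i _ => hc0 i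
  set D : (Fin n → ℝ) →ₗ[ℝ] (Fin n → ℝ) := Matrix.toLin' (Matrix.diagonal c) with hD
  have hdet : LinearMap.det D = ∏ i, c i := by
    rw [hD, LinearMap.det_toLin', Matrix.det_diagonal]
  have hDm : Measurable (fun y : Fin n → ℝ => D y) :=
    (LinearMap.continuous_on_pi D).measurable
  have hDapp : ∀ (y : Fin n → ℝ) (i : Fin n), D y i = c i * y i := by
    intro y i
    rw [hD, Matrix.toLin'_apply, Matrix.mulVec_diagonal]
  have hF1m : Measurable (fun y : Fin n → ℝ =>
      ENNReal.ofReal (h - ∑ i, (a i) ^ 2 * (y i) ^ 2)) := by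
    refine ENNReal.measurable_ofReal.comp ?_
    exact (continuous_const.sub (continuous_finset_sum _ fun i _ =>
      continuous_const.mul ((continuous_apply i).pow 2))).measurable
  have hmap : Measure.map (fun y : Fin n → ℝ => D y) volume
      = ENNReal.ofReal ((∏ i, c i)⁻¹) • volume := by
    have := Real.map_linearMap_volume_pi_eq_smul_volume_pi (f := D)
      (by rw [hdet]; exact hC.ne')
    rw [hdet] at this
    rw [abs_of_pos (inv_pos.2 hC)] at this
    exact this
  have e1 : (∫⁻ y : Fin n → ℝ, ENNReal.ofReal (h - ∑ i, (a i) ^ 2 * (D y i) ^ 2))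
      = ENNReal.ofReal ((∏ i, c i)⁻¹)
        * ∫⁻ y : Fin n → ℝ, ENNReal.ofReal (h - ∑ i, (a i) ^ 2 * (y i) ^ 2) := by
    rw [← lintegral_map hF1m hDm, hmap, lintegral_smul_measure, smul_eq_mul]
  have e2 : (∫⁻ y : Fin n → ℝ, ENNReal.ofReal (h - ∑ i, (a i) ^ 2 * (y i) ^ 2))
      = ENNReal.ofReal (∏ i, c i)
        * ∫⁻ y : Fin n → ℝ, ENNReal.ofReal (h - ∑ i, (a i) ^ 2 * (D y i) ^ 2) := by
    rw [e1, ← mul_assoc, ← ENNReal.ofReal_mul hC.le, mul_inv_cancel₀ hC.ne',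
      ENNReal.ofReal_one, one_mul]
  have key : ∀ y : Fin n → ℝ, ENNReal.ofReal (h - ∑ i, (a i) ^ 2 * (D y i) ^ 2)
      = ENNReal.ofReal h * ENNReal.ofReal (1 - ∑ i, (y i) ^ 2) := by
    intro y
    have hterm : ∀ i ∈ Finset.univ, (a i) ^ 2 * (D y i) ^ 2 = h * (y i) ^ 2 := by
      intro i _
      have hai : a i ≠ 0 := (ha i).ne'
      have h1 : a i * c i = Real.sqrt h := by
        rw [hc]; field_simp
      rw [hDapp y i]
      calc (a i) ^ 2 * (c i * y i) ^ 2 = (a i * c i) ^ 2 * (y i) ^ 2 := by ring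
        _ = h * (y i) ^ 2 := by rw [h1, Real.sq_sqrt hh.le]
    rw [Finset.sum_congr rfl hterm, ← Finset.mul_sum, ← ENNReal.ofReal_mul hh.le]
    congr 1
    ring
  have step3 : (∫⁻ y : Fin n → ℝ, ENNReal.ofReal (h - ∑ i, (a i) ^ 2 * (y i) ^ 2))
      = ENNReal.ofReal (∏ i, c i) * (ENNReal.ofReal h
        * ∫⁻ y : Fin n → ℝ, ENNReal.ofReal (1 - ∑ i, (y i) ^ 2)) := by
    rw [e2]
    congr 1
    calc (∫⁻ y : Fin n → ℝ, ENNReal.ofReal (h - ∑ i, (a i) ^ 2 * (D y i) ^ 2))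
        = ∫⁻ y : Fin n → ℝ, ENNReal.ofReal h * ENNReal.ofReal (1 - ∑ i, (y i) ^ 2) :=
          lintegral_congr key
      _ = ENNReal.ofReal h * ∫⁻ y : Fin n → ℝ, ENNReal.ofReal (1 - ∑ i, (y i) ^ 2) :=
          lintegral_const_mul' _ _ ENNReal.ofReal_ne_top
  -- step 4 : the unit-ball integral
  haveI : Nontrivial (EuclideanSpace ℝ (Fin n)) := inferInstance
  set φ : ℝ → ℝ := fun y => max (1 - y ^ 2) 0 with hφ
  have hφc : Continuous φ := (continuous_const.sub (continuous_pow 2)).max continuous_const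
  have hnorm : ∀ x : EuclideanSpace ℝ (Fin n), ‖x‖ ^ 2 = ∑ i, (x i) ^ 2 := by
    intro x
    rw [EuclideanSpace.norm_eq, Real.sq_sqrt (by positivity)]
    exact Finset.sum_congr rfl fun i _ => by rw [Real.norm_eq_abs, sq_abs]
  have hgc : Continuous fun x : EuclideanSpace ℝ (Fin n) => φ ‖x‖ := hφc.comp continuous_norm
  have hgs : HasCompactSupport fun x : EuclideanSpace ℝ (Fin n) => φ ‖x‖ := by
    refine HasCompactSupport.intro (isCompact_closedBall (0 : EuclideanSpace ℝ (Fin n)) 1) ?_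
    intro x hx
    have h1 : 1 < ‖x‖ := by
      simpa [Metric.mem_closedBall, dist_zero_right] using hx
    have h2 : 1 - ‖x‖ ^ 2 ≤ 0 := by nlinarith
    simpa [hφ] using max_eq_right h2
  have hgint : Integrable (fun x : EuclideanSpace ℝ (Fin n) => φ ‖x‖) :=
    hgc.integrable_of_hasCompactSupport hgs
  have hωnn : 0 ≤ ω := by rw [hω]; exact ENNReal.toReal_nonneg
  have step4a : (∫⁻ y : Fin n → ℝ, ENNReal.ofReal (1 - ∑ i, (y i) ^ 2))
      = ∫⁻ x : EuclideanSpace ℝ (Fin n), ENNReal.ofReal (φ ‖x‖) := by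
    rw [MeasurePreserving.lintegral_map_equiv
      (fun y : Fin n → ℝ => ENNReal.ofReal (1 - ∑ i, (y i) ^ 2)) e hmp]
    refine lintegral_congr fun x => ?_
    have h2 : (∑ i, (e x i) ^ 2 : ℝ) = ‖x‖ ^ 2 := by
      rw [hnorm x]; rfl
    rw [show (1 : ℝ) - ∑ i, (e x i) ^ 2 = 1 - ‖x‖ ^ 2 by rw [h2]]
    have h3 : φ ‖x‖ = max (1 - ‖x‖ ^ 2) 0 := rfl
    rw [h3]
    rcases le_total (1 - ‖x‖ ^ 2) 0 with h'|h'
    · rw [max_eq_right h', ENNReal.ofReal_of_nonpos h', ENNReal.ofReal_zero]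
    · rw [max_eq_left h']
  have h1d : (∫ y in Set.Ioi (0:ℝ), y ^ (n - 1) • φ y) = 2 / (↑n * (↑n + 2)) := by
    have heq : Set.EqOn (fun y : ℝ => y ^ (n - 1) • φ y)
        ((Set.Ioc (0:ℝ) 1).indicator fun y => y ^ (n - 1) - y ^ (n + 1)) (Set.Ioi 0) := by
      intro y hy
      have hy0 : (0:ℝ) < y := hy
      rcases le_or_gt y 1 with h1|h1
      · rw [Set.indicator_of_mem (Set.mem_Ioc.mpr ⟨hy0, h1⟩)]
        have hφy : φ y = 1 - y ^ 2 := max_eq_left (by nlinarith)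
        have hpow : y ^ (n - 1) * y ^ 2 = y ^ (n + 1) := by
          rw [← pow_add]; congr 1; omega
        simp only [smul_eq_mul, hφy]
        rw [mul_sub, mul_one, hpow]
      · rw [Set.indicator_of_notMem (fun hmem => absurd hmem.2 (not_le.2 h1))]
        have hφy : φ y = 0 := max_eq_right (by nlinarith)
        simp only [smul_eq_mul, hφy, mul_zero]
    rw [setIntegral_congr_fun measurableSet_Ioi heq,
      integral_indicator measurableSet_Ioc, Measure.restrict_restrict measurableSet_Ioc,
      Set.inter_eq_left.mpr Set.Ioc_subset_Ioi_self,
      ← intervalIntegral.integral_of_le zero_le_one]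
    rw [intervalIntegral.integral_sub (intervalIntegral.intervalIntegrable_pow _)
      (intervalIntegral.intervalIntegrable_pow _)]
    rw [integral_pow, integral_pow]
    rw [one_pow, one_pow, zero_pow (by omega : n - 1 + 1 ≠ 0),
      zero_pow (by omega : n + 1 + 1 ≠ 0)]
    have hcast : ((n - 1 : ℕ) : ℝ) = (n : ℝ) - 1 := by
      have := Nat.cast_sub hn (R := ℝ); simpa using this
    rw [hcast]
    push_cast
    rw [show ((n:ℝ)) - 1 + 1 = (n:ℝ) by ring, show ((n:ℝ)) + 1 + 1 = (n:ℝ) + 2 by ring]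
    have h2 : (0:ℝ) < (n:ℝ) + 2 := by positivity
    field_simp
    ring
  have step4b : (∫⁻ x : EuclideanSpace ℝ (Fin n), ENNReal.ofReal (φ ‖x‖))
      = ENNReal.ofReal (2 * ω / (↑n + 2)) := by
    rw [← ofReal_integral_eq_lintegral_ofReal hgint
      (Filter.Eventually.of_forall fun x => le_max_right _ _)]
    congr 1
    rw [MeasureTheory.integral_fun_norm_addHaar volume φ, finrank_euclideanSpace_fin, h1d, measureReal_def, ← hω]
    rw [nsmul_eq_mul, smul_eq_mul]
    have h2 : (0:ℝ) < (n:ℝ) + 2 := by positivity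
    field_simp
  -- assemble everything
  have hprod : ∏ i, c i = Real.sqrt h ^ n / ∏ i, a i := by
    simp only [hc]
    rw [Finset.prod_div_distrib, Finset.prod_const, Finset.card_univ, Fintype.card_fin]
  have hpow2 : Real.sqrt h ^ n * h = h ^ (((n : ℝ) + 2) / 2) := by
    rw [Real.sqrt_eq_rpow, ← Real.rpow_natCast (h ^ ((1:ℝ)/2)) n, ← Real.rpow_mul hh.le,
      ← Real.rpow_add_one hh.ne']
    congr 1
    ring
  rw [step1, step2, step3, step4a, step4b]
  rw [ENNReal.toReal_mul, ENNReal.toReal_mul,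
    ENNReal.toReal_ofReal hC.le, ENNReal.toReal_ofReal hh.le,
    ENNReal.toReal_ofReal (div_nonneg (by linarith) (by positivity))]
  rw [hσ, hprod, ← hpow2]
  have h2 : (0:ℝ) < (n:ℝ) + 2 := by positivity
  field_simp
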